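/- Consider the personalized bi-valued instance with two agents and four goods g_1, g_2, g_3, g_4, where agent 1's values for (g_1, g_2, g_3, g_4) are (6, 6, 1, 1) and agent 2's values are (3, 3, 1, 1), with additive utilities. Then no allocation of this instance is both EFX and fractionally Pareto-optimal. -/

import Mathlib

open Finset

/-- Additive utility of a bundle: the sum of the values of the single goods in it. -/
def util (u : Fin 2 → Fin 4 → ℝ) (i : Fin 2) (S : Finset (Fin 4)) : ℝ :=
  ∑ g ∈ S, u i g

/-- `X` is an allocation: a partition of the four goods into two (possibly empty) bundles. -/
def IsAllocation (X : Fin 2 → Finset (Fin 4)) : Prop :=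
  (∀ g : Fin 4, ∃ i, g ∈ X i) ∧ ∀ i j : Fin 2, i ≠ j → Disjoint (X i) (X j)

/-- `X` is EFX w.r.t. utilities `u`. -/
def IsEFX (u : Fin 2 → Fin 4 → ℝ) (X : Fin 2 → Finset (Fin 4)) : Prop :=
  ∀ i j : Fin 2, ∀ g ∈ X j, util u i ((X j).erase g) ≤ util u i (X i)

/-- `z` is a fractional allocation: each agent `i` gets a share `z i g ∈ [0, 1]` of each
good `g`, and the shares of each good sum to `1`. -/
def IsFracAllocation (z : Fin 2 → Fin 4 → ℝ) : Prop :=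
  (∀ i g, 0 ≤ z i g ∧ z i g ≤ 1) ∧ ∀ g, ∑ i, z i g = 1

/-- Agent `i`'s utility under the fractional allocation `z`. -/
def fracUtil (u : Fin 2 → Fin 4 → ℝ) (z : Fin 2 → Fin 4 → ℝ) (i : Fin 2) : ℝ :=
  ∑ g, z i g * u i g

/-- `X` is fractionally Pareto-optimal: no fractional allocation gives every agent at
least her utility in `X` and some agent strictly more. -/
def IsFPO (u : Fin 2 → Fin 4 → ℝ) (X : Fin 2 → Finset (Fin 4)) : Prop :=
  ¬ ∃ z : Fin 2 → Fin 4 → ℝ, IsFracAllocation z ∧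
    (∀ i, util u i (X i) ≤ fracUtil u z i) ∧ ∃ j, util u j (X j) < fracUtil u z j

/-- Agent 1's values for the goods `(g₁, g₂, g₃, g₄)` are `(6, 6, 1, 1)` and agent 2's
values are `(3, 3, 1, 1)`. -/
def uFPO : Fin 2 → Fin 4 → ℝ := ![![6, 6, 1, 1], ![3, 3, 1, 1]]

lemma util_eq (u : Fin 2 → Fin 4 → ℝ) (i : Fin 2) (S : Finset (Fin 4)) :
    util u i S = ∑ g : Fin 4, if g ∈ S then u i g else 0 := by
  rw [util, Finset.sum_ite_mem, Finset.univ_inter]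

lemma fpo_kill (X : Fin 2 → Finset (Fin 4)) (a : ℝ)
    (hfpo : IsFPO uFPO X) (h0 : util uFPO 0 (X 0) = 7) (h1 : util uFPO 1 (X 1) = 4)
    (ha1 : 1/3 ≤ a) (ha2 : a ≤ 1) : False := by
  apply hfpo
  refine ⟨![![a, 4/3 - a, 0, 0], ![1 - a, 1 - (4/3 - a), 1, 1]], ⟨?_, ?_⟩, ?_, 0, ?_⟩
  · intro i g
    fin_cases i <;> fin_cases g <;> simp <;> constructor <;> linarith
  · intro g
    fin_cases g <;> simp [Fin.sum_univ_two]
  · intro i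
    fin_cases i
    · show util uFPO 0 (X 0) ≤ fracUtil uFPO _ 0
      rw [h0]; simp [fracUtil, Fin.sum_univ_four, uFPO]; linarith
    · show util uFPO 1 (X 1) ≤ fracUtil uFPO _ 1
      rw [h1]; simp [fracUtil, Fin.sum_univ_four, uFPO]; linarith
  · rw [h0]; simp [fracUtil, Fin.sum_univ_four, uFPO]; linarith

/-- In the instance where agent 1's values are `(6, 6, 1, 1)` and agent 2's
values are `(3, 3, 1, 1)`, no allocation is both EFX and fractionally Pareto-optimal. -/
theorem no_efx_and_fpo :
    ¬ ∃ X : Fin 2 → Finset (Fin 4), IsAllocation X ∧ IsEFX uFPO X ∧ IsFPO uFPO X := by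
  rintro ⟨X, ⟨cover, disj⟩, efx, fpo⟩
  obtain ⟨S, hS⟩ : ∃ S, X 0 = S := ⟨_, rfl⟩
  have hX1 : X 1 = Sᶜ := by
    ext g
    simp only [Finset.mem_compl, ← hS]
    constructor
    · intro h hg
      exact Finset.disjoint_left.mp (disj 0 1 (by decide)) hg h
    · intro hg
      rcases cover g with ⟨i, hi⟩
      fin_cases i
      exacts [absurd hi hg, hi]
  fin_cases S
  -- {}
  · have := efx 0 1 3 (by rw [hX1]; decide)
    rw [hS, hX1] at this
    simp (config := { decide := true }) only [util_eq, Fin.sum_univ_four, uFPO] at this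
    norm_num [Matrix.cons_val_two, Matrix.cons_val_three] at this
  -- {0}
  · have := efx 0 1 2 (by rw [hX1]; decide)
    rw [hS, hX1] at this
    simp (config := { decide := true }) only [util_eq, Fin.sum_univ_four, uFPO] at this
    norm_num [Matrix.cons_val_two, Matrix.cons_val_three] at this
  -- {1}
  · have := efx 0 1 2 (by rw [hX1]; decide)
    rw [hS, hX1] at this
    simp (config := { decide := true }) only [util_eq, Fin.sum_univ_four, uFPO] at this
    norm_num [Matrix.cons_val_two, Matrix.cons_val_three] at this
  -- {0,1}
  · have := efx 1 0 0 (by rw [hS]; decide)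
    rw [hS, hX1] at this
    simp (config := { decide := true }) only [util_eq, Fin.sum_univ_four, uFPO] at this
    norm_num [Matrix.cons_val_two, Matrix.cons_val_three] at this
  -- {2}
  · have := efx 0 1 3 (by rw [hX1]; decide)
    rw [hS, hX1] at this
    simp (config := { decide := true }) only [util_eq, Fin.sum_univ_four, uFPO] at this
    norm_num [Matrix.cons_val_two, Matrix.cons_val_three] at this
  -- {0,2} : EFX, kill by FPO with a = 1
  · refine fpo_kill X 1 fpo ?_ ?_ (by norm_num) (by norm_num)
    · rw [hS]
      simp (config := { decide := true }) only [util_eq, Fin.sum_univ_four, uFPO]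
      norm_num [Matrix.cons_val_two, Matrix.cons_val_three]
    · rw [hX1]
      simp (config := { decide := true }) only [util_eq, Fin.sum_univ_four, uFPO]
      norm_num [Matrix.cons_val_two, Matrix.cons_val_three]
  -- {1,2} : EFX, a = 1/3
  · refine fpo_kill X (1/3) fpo ?_ ?_ (by norm_num) (by norm_num)
    · rw [hS]
      simp (config := { decide := true }) only [util_eq, Fin.sum_univ_four, uFPO]
      norm_num [Matrix.cons_val_two, Matrix.cons_val_three]
    · rw [hX1]
      simp (config := { decide := true }) only [util_eq, Fin.sum_univ_four, uFPO]
      norm_num [Matrix.cons_val_two, Matrix.cons_val_three]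
  -- {0,1,2}
  · have := efx 1 0 0 (by rw [hS]; decide)
    rw [hS, hX1] at this
    simp (config := { decide := true }) only [util_eq, Fin.sum_univ_four, uFPO] at this
    norm_num [Matrix.cons_val_two, Matrix.cons_val_three] at this
  -- {3}
  · have := efx 0 1 2 (by rw [hX1]; decide)
    rw [hS, hX1] at this
    simp (config := { decide := true }) only [util_eq, Fin.sum_univ_four, uFPO] at this
    norm_num [Matrix.cons_val_two, Matrix.cons_val_three] at this
  -- {0,3} : EFX, a = 1
  · refine fpo_kill X 1 fpo ?_ ?_ (by norm_num) (by norm_num)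
    · rw [hS]
      simp (config := { decide := true }) only [util_eq, Fin.sum_univ_four, uFPO]
      norm_num [Matrix.cons_val_two, Matrix.cons_val_three]
    · rw [hX1]
      simp (config := { decide := true }) only [util_eq, Fin.sum_univ_four, uFPO]
      norm_num [Matrix.cons_val_two, Matrix.cons_val_three]
  -- {1,3} : EFX, a = 1/3
  · refine fpo_kill X (1/3) fpo ?_ ?_ (by norm_num) (by norm_num)
    · rw [hS]
      simp (config := { decide := true }) only [util_eq, Fin.sum_univ_four, uFPO]
      norm_num [Matrix.cons_val_two, Matrix.cons_val_three]
    · rw [hX1]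
      simp (config := { decide := true }) only [util_eq, Fin.sum_univ_four, uFPO]
      norm_num [Matrix.cons_val_two, Matrix.cons_val_three]
  -- {0,1,3}
  · have := efx 1 0 0 (by rw [hS]; decide)
    rw [hS, hX1] at this
    simp (config := { decide := true }) only [util_eq, Fin.sum_univ_four, uFPO] at this
    norm_num [Matrix.cons_val_two, Matrix.cons_val_three] at this
  -- {2,3}
  · have := efx 0 1 1 (by rw [hX1]; decide)
    rw [hS, hX1] at this
    simp (config := { decide := true }) only [util_eq, Fin.sum_univ_four, uFPO] at this
    norm_num [Matrix.cons_val_two, Matrix.cons_val_three] at this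
  -- {0,2,3}
  · have := efx 1 0 2 (by rw [hS]; decide)
    rw [hS, hX1] at this
    simp (config := { decide := true }) only [util_eq, Fin.sum_univ_four, uFPO] at this
    norm_num [Matrix.cons_val_two, Matrix.cons_val_three] at this
  -- {1,2,3}
  · have := efx 1 0 2 (by rw [hS]; decide)
    rw [hS, hX1] at this
    simp (config := { decide := true }) only [util_eq, Fin.sum_univ_four, uFPO] at this
    norm_num [Matrix.cons_val_two, Matrix.cons_val_three] at this
  -- {0,1,2,3}
  · have := efx 1 0 3 (by rw [hS]; decide)
    rw [hS, hX1] at this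
    simp (config := { decide := true }) only [util_eq, Fin.sum_univ_four, uFPO] at this
    norm_num [Matrix.cons_val_two, Matrix.cons_val_three] at this
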